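/- Let m > 1, t_f > 0, I0 ∈ (0,1). The transcendental equation exp(x) = exp(t_f)·(I0/(1 − I0))·(m − 1 − x) has exactly one real solution x. Moreover, a point x ∈ (0, t_f) satisfies the interior equilibrium condition I(t_f − x)·(m − x) = 1 if and only if x solves this transcendental equation. -/

import Mathlib

/-- Prevalence function `I(u) = I0 / (I0 + (1 - I0) exp(-u))`. -/
noncomputable def Ifun (I0 u : ℝ) : ℝ := I0 / (I0 + (1 - I0) * Real.exp (-u))

/-- The transcendental equation `exp(x) = exp(t_f) (I0/(1-I0)) (m - 1 - x)` has exactly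
one real solution, and a point `x ∈ (0, t_f)` satisfies the interior equilibrium
condition `I(t_f - x)(m - x) = 1` if and only if it solves this equation. -/
theorem stmt11 (m tf I0 : ℝ) (hm : 1 < m) (htf : 0 < tf)
    (hI0 : I0 ∈ Set.Ioo (0:ℝ) 1) :
    (∃! x : ℝ, Real.exp x = Real.exp tf * (I0 / (1 - I0)) * (m - 1 - x)) ∧
    ∀ x ∈ Set.Ioo (0:ℝ) tf,
      (Ifun I0 (tf - x) * (m - x) = 1 ↔
        Real.exp x = Real.exp tf * (I0 / (1 - I0)) * (m - 1 - x)) := by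
  obtain ⟨hI0p, hI01⟩ := hI0
  set C := Real.exp tf * (I0 / (1 - I0)) with hC
  have hCpos : 0 < C := mul_pos (Real.exp_pos _) (div_pos hI0p (by linarith))
  constructor
  · have hmono : StrictMono (fun x : ℝ => Real.exp x + C * x) := by
      intro a b hab
      have h1 := Real.exp_lt_exp.2 hab
      have h2 : C * a < C * b := by nlinarith
      simpa using add_lt_add h1 h2
    have hcont : Continuous (fun x : ℝ => Real.exp x + C * x) :=
      Real.continuous_exp.add (continuous_const.mul continuous_id)
    set a := m - 1 - Real.exp (m - 1) / C with ha
    have haux : 0 < Real.exp (m - 1) / C := div_pos (Real.exp_pos _) hCpos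
    have hab : a ≤ m - 1 := by simp only [ha]; linarith
    have haval : Real.exp a + C * a ≤ C * (m - 1) := by
      have h2 : Real.exp a ≤ Real.exp (m - 1) := Real.exp_le_exp.2 hab
      have h3 : C * a = C * (m - 1) - Real.exp (m - 1) := by
        rw [ha]; field_simp [hCpos.ne']
      linarith
    have hbval : C * (m - 1) ≤ Real.exp (m - 1) + C * (m - 1) := by
      have := (Real.exp_pos (m - 1)).le; linarith
    obtain ⟨x, hxmem, hxval⟩ := intermediate_value_Icc hab hcont.continuousOn
      (Set.mem_Icc.2 ⟨haval, hbval⟩)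
    have hxval' : Real.exp x + C * x = C * (m - 1) := hxval
    have hring : ∀ y : ℝ, C * (m - 1 - y) = C * (m - 1) - C * y := by
      intro y; ring
    refine ⟨x, show Real.exp x = C * (m - 1 - x) by rw [hring]; linarith, ?_⟩
    intro y hy
    rw [hring] at hy
    have hyval : Real.exp y + C * y = C * (m - 1) := by linarith
    exact hmono.injective (show Real.exp y + C * y = Real.exp x + C * x by
      rw [hyval, hxval'])
  · intro x hx
    have hD : 0 < I0 + (1 - I0) * Real.exp (-(tf - x)) := by
      have := Real.exp_pos (-(tf - x)); nlinarith
    have hexp : Real.exp (-(tf - x)) = Real.exp x / Real.exp tf := by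
      rw [← Real.exp_sub]; ring_nf
    rw [Ifun, div_mul_eq_mul_div, div_eq_one_iff_eq hD.ne', hexp]
    have het := Real.exp_pos tf
    have h1I : (0:ℝ) < 1 - I0 := by linarith
    rw [hC]
    constructor <;> intro h
    · field_simp at h ⊢
      nlinarith [h]
    · field_simp at h ⊢
      nlinarith [h]
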